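/- Let d be a natural number that is not a perfect square, a_0 = ⌊√d⌋, and (a_n) the sequence of partial quotients of √d. Then (a_n)_{n≥1} is periodic; denoting by T its minimal period (so a_{n+T} = a_n for all n ≥ 1), one has a_T = 2a_0, and the list (a_1, a_2, …, a_{T−1}) is a palindrome: a_k = a_{T−k} for all k with 1 ≤ k ≤ T−1. -/

import Mathlib

/-- The complete quotients of a real number `x`:
`cq x 0 = x` and `cq x (n+1) = 1 / (cq x n - ⌊cq x n⌋)`. -/
noncomputable def cq (x : ℝ) : ℕ → ℝ
  | 0 => x
  | n + 1 => (Int.fract (cq x n))⁻¹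

/-- The partial quotients of a real number `x`: `pq x n = ⌊cq x n⌋`. -/
noncomputable def pq (x : ℝ) (n : ℕ) : ℤ := ⌊cq x n⌋

namespace Stmt6Aux

lemma cq_add (x : ℝ) (n m : ℕ) : cq x (n + m) = cq (cq x n) m := by
  induction m with
  | zero => rfl
  | succ m ih => rw [← Nat.add_assoc, cq, ih, cq]

lemma Irrational.fract' {x : ℝ} (h : Irrational x) : Irrational (Int.fract x) :=
  h.sub_intCast _

lemma irr_cq {x : ℝ} (h : Irrational x) (n : ℕ) : Irrational (cq x n) := by
  induction n with
  | zero => exact h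
  | succ n ih => exact (Irrational.fract' ih).inv

lemma fract_pos {x : ℝ} (h : Irrational x) : 0 < Int.fract x :=
  lt_of_le_of_ne (Int.fract_nonneg x) (by
    intro e; exact (Irrational.fract' h) ⟨0, by simp [← e]⟩)

lemma cq_gt_one {x : ℝ} (h : Irrational x) {n : ℕ} (hn : 1 ≤ n) : 1 < cq x n := by
  obtain ⟨m, rfl⟩ := Nat.exists_eq_add_of_le hn
  rw [Nat.add_comm, cq]
  have h1 : 0 < Int.fract (cq x m) := fract_pos (irr_cq h m)
  have h2 : Int.fract (cq x m) < 1 := Int.fract_lt_one _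
  exact (one_lt_inv₀ h1).2 h2

lemma pq_pos {x : ℝ} (h : Irrational x) {n : ℕ} (hn : 1 ≤ n) : 1 ≤ pq x n :=
  Int.le_floor.2 (by exact_mod_cast (cq_gt_one h hn).le)

lemma cq_succ_eq {x : ℝ} (n : ℕ) : cq x n = pq x n + (cq x (n + 1))⁻¹ := by
  rw [cq, inv_inv, pq]
  have := Int.fract_add_floor (cq x n)
  rw [Int.fract]; ring

noncomputable def PQ (d : ℕ) : ℕ → ℤ × ℤ
  | 0 => (0, 1)
  | n + 1 =>
    let p := (PQ d n).1
    let q := (PQ d n).2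
    let p' := pq (Real.sqrt d) n * q - p
    (p', ((d : ℤ) - p' ^ 2) / q)

noncomputable def yy (d : ℕ) (n : ℕ) : ℝ :=
  (((PQ d n).1 : ℝ) - Real.sqrt d) / (PQ d n).2

lemma d_not_sq_int {d : ℕ} (hd : ¬ IsSquare d) (z : ℤ) : z ^ 2 ≠ (d : ℤ) := by
  intro h
  exact hd (by
    have : IsSquare ((d : ℤ)) := ⟨z, by rw [← h]; ring⟩
    exact_mod_cast Int.isSquare_natCast_iff.mp this)

lemma rep {d : ℕ} (hd : ¬ IsSquare d) (n : ℕ) :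
    (PQ d n).2 ≠ 0 ∧ (PQ d n).2 ∣ ((d : ℤ) - (PQ d n).1 ^ 2) ∧
      cq (Real.sqrt d) n = ((PQ d n).1 + Real.sqrt d) / (PQ d n).2 := by
  have hirr : Irrational (Real.sqrt d) := irrational_sqrt_natCast_iff.mpr hd
  have hsd : Real.sqrt d ^ 2 = (d : ℝ) := Real.sq_sqrt (Nat.cast_nonneg d)
  induction n with
  | zero => refine ⟨one_ne_zero, by simp [PQ], by simp [PQ, cq]⟩
  | succ n ih =>
    obtain ⟨hq0, hdvd, hx⟩ := ih
    set p := (PQ d n).1 with hp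
    set q := (PQ d n).2 with hqq
    set a := pq (Real.sqrt d) n with ha
    set p' := a * q - p with hp'
    have hdvd' : q ∣ ((d : ℤ) - p' ^ 2) := by
      have : ((d : ℤ) - p' ^ 2) = ((d : ℤ) - p ^ 2) + q * (2 * a * p - a ^ 2 * q) := by
        rw [hp']; ring
      rw [this]
      exact dvd_add hdvd (Dvd.intro _ rfl)
    set q' := ((d : ℤ) - p' ^ 2) / q with hq'
    have hqq' : q * q' = (d : ℤ) - p' ^ 2 := Int.mul_ediv_cancel' hdvd'
    have hPQ : PQ d (n + 1) = (p', q') := rfl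
    have hq'0 : q' ≠ 0 := by
      intro h
      apply d_not_sq_int hd p'
      rw [h, mul_zero] at hqq'
      linarith
    refine ⟨hPQ ▸ hq'0, ?_, ?_⟩
    · rw [hPQ]
      exact hqq' ▸ Dvd.intro_left _ rfl
    · have hqR : (q : ℝ) ≠ 0 := Int.cast_ne_zero.2 hq0
      have hq'R : (q' : ℝ) ≠ 0 := Int.cast_ne_zero.2 hq'0
      have hne : Real.sqrt d - (p' : ℝ) ≠ 0 := sub_ne_zero.2 (hirr.ne_int p')
      have hfr : Int.fract (cq (Real.sqrt d) n) = (Real.sqrt d - (p' : ℝ)) / q := by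
        have hfl : ⌊cq (Real.sqrt d) n⌋ = a := rfl
        rw [Int.fract, hfl, hx]
        field_simp
        rw [hp']
        push_cast
        ring
      have hcross : (q : ℝ) * q' = (Real.sqrt d - p') * (p' + Real.sqrt d) := by
        have h2 : ((q : ℝ)) * q' = ((d : ℝ)) - (p' : ℝ) ^ 2 := by exact_mod_cast hqq'
        nlinarith [hsd]
      rw [hPQ, cq, hfr, inv_div]
      rw [div_eq_div_iff hne hq'R]
      linear_combination hcross

lemma yy_succ {d : ℕ} (hd : ¬ IsSquare d) (n : ℕ) :
    yy d (n + 1) = (yy d n - pq (Real.sqrt d) n)⁻¹ := by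
  have hirr : Irrational (Real.sqrt d) := irrational_sqrt_natCast_iff.mpr hd
  have hsd : Real.sqrt d ^ 2 = (d : ℝ) := Real.sq_sqrt (Nat.cast_nonneg d)
  obtain ⟨hq0, hdvd, -⟩ := rep hd n
  obtain ⟨hq'0, -, -⟩ := rep hd (n + 1)
  set p := (PQ d n).1
  set q := (PQ d n).2
  set a := pq (Real.sqrt d) n with ha
  have hp' : (PQ d (n + 1)).1 = a * q - p := rfl
  set p' := (PQ d (n + 1)).1 with hp'd
  set q' := (PQ d (n + 1)).2 with hq'd
  have hdvd' : q ∣ ((d : ℤ) - p' ^ 2) := by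
    have : ((d : ℤ) - p' ^ 2) = ((d : ℤ) - p ^ 2) + q * (2 * a * p - a ^ 2 * q) := by
      rw [hp']; ring
    rw [this]
    exact dvd_add hdvd (Dvd.intro _ rfl)
  have hqq' : q * q' = (d : ℤ) - p' ^ 2 := by
    have : q' = ((d : ℤ) - p' ^ 2) / q := rfl
    rw [this]
    exact Int.mul_ediv_cancel' hdvd'
  have hqR : (q : ℝ) ≠ 0 := Int.cast_ne_zero.2 hq0
  have hq'R : (q' : ℝ) ≠ 0 := Int.cast_ne_zero.2 hq'0
  have hne : (-(p' : ℝ) - Real.sqrt d) ≠ 0 := by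
    intro h
    exact hirr.ne_int (-p') (by push_cast; linarith)
  have hstep : yy d n - (a : ℝ) = (-(p' : ℝ) - Real.sqrt d) / q := by
    rw [yy]
    change ((p : ℝ) - Real.sqrt d) / q - (a : ℝ) = _
    field_simp
    rw [hp']
    push_cast
    ring
  rw [hstep, yy, inv_div, ← hp'd, ← hq'd, div_eq_div_iff hq'R hne]
  have h2 : (q : ℝ) * q' = (d : ℝ) - (p' : ℝ) ^ 2 := by exact_mod_cast hqq'
  linear_combination hsd - h2

lemma red {d : ℕ} (hd : ¬ IsSquare d) {n : ℕ} (hn : 1 ≤ n) :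
    -1 < yy d n ∧ yy d n < 0 := by
  have hirr : Irrational (Real.sqrt d) := irrational_sqrt_natCast_iff.mpr hd
  have hsd : Real.sqrt d ^ 2 = (d : ℝ) := Real.sq_sqrt (Nat.cast_nonneg d)
  have hd2 : 2 ≤ d := by
    rcases Nat.lt_or_ge d 2 with h | h
    · interval_cases d
      · exact absurd ⟨0, rfl⟩ hd
      · exact absurd ⟨1, rfl⟩ hd
    · exact h
  have hsd1 : 1 < Real.sqrt d := by
    have : (1 : ℝ) < (d : ℝ) := by exact_mod_cast hd2
    nlinarith [Real.sqrt_nonneg (d : ℝ), hsd]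
  obtain ⟨m, rfl⟩ := Nat.exists_eq_add_of_le hn
  induction m with
  | zero =>
    have hPQ1 : PQ d 1 = (pq (Real.sqrt d) 0, (d : ℤ) - (pq (Real.sqrt d) 0) ^ 2) := by
      simp [PQ]
    have ha0R : (pq (Real.sqrt d) 0 : ℝ) = (⌊Real.sqrt d⌋ : ℝ) := by rw [pq]; rfl
    set a0 := pq (Real.sqrt d) 0 with ha0
    have h1 : (a0 : ℝ) < Real.sqrt d := by
      rw [ha0R]
      exact lt_of_le_of_ne (Int.floor_le _) (fun h => hirr ⟨⌊Real.sqrt d⌋, h⟩)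
    have h2 : (1 : ℝ) ≤ (a0 : ℝ) := by
      rw [ha0R]
      have : (1 : ℤ) ≤ ⌊Real.sqrt d⌋ := Int.le_floor.2 (by push_cast; linarith)
      exact_mod_cast this
    have hden : (0 : ℝ) < (d : ℝ) - (a0 : ℝ) ^ 2 := by nlinarith
    rw [yy, hPQ1]
    push_cast
    constructor
    · rw [lt_div_iff₀ hden]
      nlinarith [mul_pos (sub_pos.2 h1) (show (0:ℝ) < Real.sqrt d + (a0:ℝ) - 1 by linarith)]
    · exact div_neg_of_neg_of_pos (by linarith) hden
  | succ m ih =>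
    have ih' := ih (Nat.le_add_right 1 m)
    have ha : (1 : ℤ) ≤ pq (Real.sqrt d) (1 + m) := pq_pos hirr (Nat.le_add_right 1 m)
    have haR : (1 : ℝ) ≤ ((pq (Real.sqrt d) (1 + m) : ℤ) : ℝ) := by exact_mod_cast ha
    have hstep : yy d (1 + (m + 1)) = (yy d (1 + m) - pq (Real.sqrt d) (1 + m))⁻¹ := by
      rw [show 1 + (m + 1) = (1 + m) + 1 by ring]
      exact yy_succ hd (1 + m)
    set t := yy d (1 + m) - (pq (Real.sqrt d) (1 + m) : ℝ) with ht
    have ht1 : t < -1 := by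
      have := ih'.2
      rw [ht]; linarith
    rw [hstep]
    constructor
    · rw [show t⁻¹ = 1 / t from (one_div t).symm, lt_div_iff_of_neg (by linarith : t < 0)]
      linarith
    · exact inv_lt_zero.2 (by linarith)

end Stmt6Aux
namespace Stmt6Aux

lemma uniq {d : ℕ} (hd : ¬ IsSquare d) {P P' Q Q' : ℤ} (hQ : Q ≠ 0) (hQ' : Q' ≠ 0)
    (h : ((P : ℝ) + Real.sqrt d) / Q = ((P' : ℝ) + Real.sqrt d) / Q') : P = P' ∧ Q = Q' := by
  have hirr : Irrational (Real.sqrt d) := irrational_sqrt_natCast_iff.mpr hd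
  have hQR : (Q : ℝ) ≠ 0 := Int.cast_ne_zero.2 hQ
  have hQ'R : (Q' : ℝ) ≠ 0 := Int.cast_ne_zero.2 hQ'
  rw [div_eq_div_iff hQR hQ'R] at h
  have hQQ : Q = Q' := by
    by_contra hne
    have hne' : ((Q' : ℚ) - Q) ≠ 0 := by
      intro h0
      have h1 : (Q' : ℚ) = Q := sub_eq_zero.1 h0
      have h2 : Q' = Q := by exact_mod_cast h1
      exact hne h2.symm
    apply hirr
    refine ⟨((P : ℚ) * Q' - P' * Q) / ((Q : ℚ) - Q'), ?_⟩
    have hne2 : ((Q : ℝ) - Q') ≠ 0 := by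
      intro h0
      apply hne'
      have : (Q : ℝ) = Q' := by linarith
      have : (Q : ℚ) = (Q' : ℚ) := by exact_mod_cast this
      rw [this]; ring
    push_cast
    rw [div_eq_iff hne2]
    linarith [h]
  refine ⟨?_, hQQ⟩
  subst hQQ
  have : (P : ℝ) = P' := by
    have := mul_right_cancel₀ hQR (by linarith [h] : ((P : ℝ)) * Q = (P' : ℝ) * Q)
    linarith
  exact_mod_cast this

lemma bounds {d : ℕ} (hd : ¬ IsSquare d) {n : ℕ} (hn : 1 ≤ n) :
    1 ≤ (PQ d n).1 ∧ (PQ d n).1 ≤ pq (Real.sqrt d) 0 ∧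
      1 ≤ (PQ d n).2 ∧ (PQ d n).2 ≤ 2 * pq (Real.sqrt d) 0 := by
  have hirr : Irrational (Real.sqrt d) := irrational_sqrt_natCast_iff.mpr hd
  have hsd0 : 0 < Real.sqrt d := by
    have := Real.sqrt_nonneg (d : ℝ)
    rcases this.lt_or_eq with h | h
    · exact h
    · exfalso; exact hirr ⟨0, by simp [← h]⟩
  obtain ⟨hq0, -, hx⟩ := rep hd n
  obtain ⟨hy1, hy2⟩ := red hd hn
  have hx1 : 1 < cq (Real.sqrt d) n := cq_gt_one hirr hn
  set P := (PQ d n).1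
  set Q := (PQ d n).2
  have hyy : yy d n = ((P : ℝ) - Real.sqrt d) / Q := rfl
  have hQpos : (0 : ℝ) < (Q : ℝ) := by
    rcases lt_trichotomy (Q : ℝ) 0 with h | h | h
    · exfalso
      have hnum1 : (0 : ℝ) < (P : ℝ) - Real.sqrt d := by
        by_contra hc
        push_neg at hc
        have : 0 ≤ yy d n := by
          rw [hyy]
          rw [div_nonneg_iff]
          exact Or.inr ⟨hc, h.le⟩
        linarith
      have hnum2 : (P : ℝ) + Real.sqrt d ≤ 0 := by
        by_contra hc
        push_neg at hc
        have : cq (Real.sqrt d) n < 0 := by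
          rw [hx]
          exact div_neg_of_pos_of_neg hc h
        linarith
      linarith
    · exact absurd (by exact_mod_cast h) hq0
    · exact h
  have hPlt : (P : ℝ) < Real.sqrt d := by
    by_contra hc
    push_neg at hc
    have : 0 ≤ yy d n := by
      rw [hyy]
      exact div_nonneg (by linarith) hQpos.le
    linarith
  have hP1 : 1 ≤ P := by
    have hsum : (0 : ℝ) < 2 * P / Q := by
      have : cq (Real.sqrt d) n + yy d n = 2 * P / Q := by
        rw [hx, hyy]; ring
      linarith
    have : (0 : ℝ) < (P : ℝ) := by
      by_contra hc
      push_neg at hc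
      have : 2 * (P : ℝ) / Q ≤ 0 := div_nonpos_iff.2 (Or.inr ⟨by linarith, hQpos.le⟩)
      linarith
    have hPZ : (0 : ℤ) < P := by exact_mod_cast this
    omega
  have ha0 : ((pq (Real.sqrt d) 0 : ℤ) : ℝ) = ((⌊Real.sqrt d⌋ : ℤ) : ℝ) := by rw [pq]; rfl
  have hPa0 : P ≤ pq (Real.sqrt d) 0 := by
    have : P ≤ ⌊Real.sqrt d⌋ := Int.le_floor.2 hPlt.le
    rw [pq]; exact this
  have hQ1 : 1 ≤ Q := by
    have hQZ : (0 : ℤ) < Q := by exact_mod_cast hQpos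
    omega
  have hQbd : Q ≤ 2 * pq (Real.sqrt d) 0 := by
    have h1 : (Q : ℝ) < (P : ℝ) + Real.sqrt d := by
      have := (one_lt_div hQpos).1 (hx ▸ hx1)
      linarith
    have h2 : Real.sqrt d < (⌊Real.sqrt d⌋ : ℝ) + 1 := Int.lt_floor_add_one _
    have h3 : (Q : ℝ) < 2 * ((⌊Real.sqrt d⌋ : ℤ) : ℝ) + 1 := by
      have hPa0R : (P : ℝ) ≤ ((⌊Real.sqrt d⌋ : ℤ) : ℝ) := by
        exact_mod_cast Int.le_floor.2 hPlt.le
      linarith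
    have h4 : Q < 2 * ⌊Real.sqrt d⌋ + 1 := by exact_mod_cast h3
    have h5 : pq (Real.sqrt d) 0 = ⌊Real.sqrt d⌋ := rfl
    omega
  exact ⟨hP1, hPa0, hQ1, hQbd⟩

end Stmt6Aux
namespace Stmt6Aux

lemma pq_from_yy {d : ℕ} (hd : ¬ IsSquare d) {n : ℕ} (hn : 1 ≤ n) :
    ⌊-(yy d (n + 1))⁻¹⌋ = pq (Real.sqrt d) n := by
  obtain ⟨hy1, hy2⟩ := red hd hn
  rw [yy_succ hd n, inv_inv]
  rw [Int.floor_eq_iff]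
  constructor
  · linarith
  · push_cast; linarith

lemma back {d : ℕ} (hd : ¬ IsSquare d) {n m : ℕ} (hn : 1 ≤ n) (hm : 1 ≤ m)
    (h : cq (Real.sqrt d) (n + 1) = cq (Real.sqrt d) (m + 1)) :
    cq (Real.sqrt d) n = cq (Real.sqrt d) m := by
  obtain ⟨hqn, -, hxn⟩ := rep hd (n + 1)
  obtain ⟨hqm, -, hxm⟩ := rep hd (m + 1)
  have hPQ : (PQ d (n + 1)).1 = (PQ d (m + 1)).1 ∧ (PQ d (n + 1)).2 = (PQ d (m + 1)).2 :=
    uniq hd hqn hqm (by rw [← hxn, ← hxm, h])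
  have hyy : yy d (n + 1) = yy d (m + 1) := by
    rw [yy, yy, hPQ.1, hPQ.2]
  have hpq : pq (Real.sqrt d) n = pq (Real.sqrt d) m := by
    rw [← pq_from_yy hd hn, ← pq_from_yy hd hm, hyy]
  rw [cq_succ_eq (x := Real.sqrt d) n, cq_succ_eq (x := Real.sqrt d) m, hpq, h]

lemma periodize {x : ℝ} {S : ℕ} (h : cq x (1 + S) = cq x 1) :
    ∀ n, 1 ≤ n → cq x (n + S) = cq x n := by
  intro n hn
  have h1 : n + S = (1 + S) + (n - 1) := by omega
  have h2 : n = 1 + (n - 1) := by omega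
  rw [h1, cq_add, h, ← cq_add, ← h2]

lemma exists_S_aux {d : ℕ} (hd : ¬ IsSquare d) {i j : ℕ} (hlt : i < j)
    (h : PQ d (i + 1) = PQ d (j + 1)) :
    ∃ S, 1 ≤ S ∧ ∀ n, 1 ≤ n → cq (Real.sqrt d) (n + S) = cq (Real.sqrt d) n := by
  have hx : cq (Real.sqrt d) (i + 1) = cq (Real.sqrt d) (j + 1) := by
    obtain ⟨-, -, hxi⟩ := rep hd (i + 1)
    obtain ⟨-, -, hxj⟩ := rep hd (j + 1)
    rw [hxi, hxj, h]
  have key : ∀ k, k ≤ i → cq (Real.sqrt d) (i + 1 - k) = cq (Real.sqrt d) (j + 1 - k) := by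
    intro k
    induction k with
    | zero => intro _; simpa using hx
    | succ k ih =>
      intro hk
      have prev := ih (by omega)
      rw [show i + 1 - k = (i - k) + 1 by omega, show j + 1 - k = (j - k) + 1 by omega] at prev
      have := back hd (show 1 ≤ i - k by omega) (show 1 ≤ j - k by omega) prev
      rw [show i + 1 - (k + 1) = i - k by omega, show j + 1 - (k + 1) = j - k by omega]
      exact this
  have h1 := key i le_rfl
  rw [show i + 1 - i = 1 by omega] at h1
  refine ⟨j - i, by omega, periodize ?_⟩
  rw [show 1 + (j - i) = j + 1 - i by omega]
  exact h1.symm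

lemma exists_S {d : ℕ} (hd : ¬ IsSquare d) :
    ∃ S, 1 ≤ S ∧ ∀ n, 1 ≤ n → cq (Real.sqrt d) (n + S) = cq (Real.sqrt d) n := by
  classical
  set a0 := pq (Real.sqrt d) 0 with ha0
  set R : Finset (ℤ × ℤ) := Finset.Icc (1, 1) (a0, 2 * a0) with hR
  have hmaps : ∀ i ∈ Finset.range (R.card + 1), PQ d (i + 1) ∈ R := by
    intro i _
    obtain ⟨h1, h2, h3, h4⟩ := bounds hd (Nat.le_add_left 1 i)
    rw [hR, Finset.mem_Icc]
    exact ⟨⟨h1, h3⟩, ⟨h2, h4⟩⟩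
  have hcard : R.card < (Finset.range (R.card + 1)).card := by
    rw [Finset.card_range]; omega
  obtain ⟨i, -, j, -, hij, hfij⟩ :=
    Finset.exists_ne_map_eq_of_card_lt_of_maps_to hcard hmaps
  rcases hij.lt_or_gt with hlt | hlt
  · exact exists_S_aux hd (by omega : i < j) (by rw [hfij])
  · exact exists_S_aux hd (by omega : j < i) (by rw [hfij])

end Stmt6Aux
namespace Stmt6Aux

lemma reduce {α : Type*} (f : ℕ → α) {S : ℕ} (hS : 1 ≤ S)
    (hf : ∀ n, 1 ≤ n → f (n + S) = f n) :
    ∀ n, 1 ≤ n → ∃ m, 1 ≤ m ∧ m ≤ S ∧ f n = f m := by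
  intro n
  induction n using Nat.strong_induction_on with
  | _ n ih =>
    intro hn
    by_cases h : n ≤ S
    · exact ⟨n, hn, h, rfl⟩
    · obtain ⟨m, hm1, hm2, hm3⟩ := ih (n - S) (by omega) (by omega)
      have h1 := hf (n - S) (by omega)
      rw [show n - S + S = n by omega] at h1
      exact ⟨m, hm1, hm2, by rw [h1, hm3]⟩

lemma pure_period {d : ℕ} (hd : ¬ IsSquare d) {T : ℕ} (hT1 : 1 ≤ T)
    (hT : ∀ n, 1 ≤ n → pq (Real.sqrt d) (n + T) = pq (Real.sqrt d) n) :
    ∀ n, 1 ≤ n → cq (Real.sqrt d) (n + T) = cq (Real.sqrt d) n := by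
  have hirr : Irrational (Real.sqrt d) := irrational_sqrt_natCast_iff.mpr hd
  obtain ⟨S, hS1, hS⟩ := exists_S hd
  set x : ℕ → ℝ := fun n => cq (Real.sqrt d) n with hx
  set g : ℕ → ℝ := fun n => |x n - x (n + T)| with hg
  have hgper : ∀ n, 1 ≤ n → g (n + S) = g n := by
    intro n hn
    have hS' : ∀ m, 1 ≤ m → x (m + S) = x m := hS
    simp only [hg]
    rw [show n + S + T = (n + T) + S by ring, hS' n hn, hS' (n + T) (by omega)]
  have hne : (Finset.Icc 1 S).Nonempty := ⟨1, Finset.mem_Icc.2 ⟨le_rfl, hS1⟩⟩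
  set c := (Finset.Icc 1 S).inf' hne x with hc
  set B := (Finset.Icc 1 S).sup' hne g with hB
  have hc1 : 1 < c := by
    obtain ⟨m, hm, hcm⟩ := Finset.exists_mem_eq_inf' hne x
    rw [hc, hcm]
    exact cq_gt_one hirr (Finset.mem_Icc.1 hm).1
  have hcx : ∀ n, 1 ≤ n → c ≤ x n := by
    intro n hn
    obtain ⟨m, hm1, hm2, he⟩ := reduce x hS1 hS n hn
    rw [he]
    exact Finset.inf'_le x (Finset.mem_Icc.2 ⟨hm1, hm2⟩)
  have hgB : ∀ n, 1 ≤ n → g n ≤ B := by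
    intro n hn
    obtain ⟨m, hm1, hm2, he⟩ := reduce g hS1 hgper n hn
    rw [he]
    exact Finset.le_sup' g (Finset.mem_Icc.2 ⟨hm1, hm2⟩)
  have hcontr : ∀ n, 1 ≤ n → c * c * g n ≤ g (n + 1) := by
    intro n hn
    have hu : 1 < x (n + 1) := cq_gt_one hirr (by omega)
    have hv : 1 < x (n + T + 1) := cq_gt_one hirr (by omega)
    have e1 : x n = pq (Real.sqrt d) n + (x (n + 1))⁻¹ := cq_succ_eq n
    have e2 : x (n + T) = pq (Real.sqrt d) n + (x (n + T + 1))⁻¹ := by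
      have := cq_succ_eq (x := Real.sqrt d) (n + T)
      rw [hT n hn] at this
      exact this
    have hd1 : x n - x (n + T) = (x (n + 1))⁻¹ - (x (n + T + 1))⁻¹ := by
      rw [e1, e2]; ring
    have key : g n * (x (n + 1) * x (n + T + 1)) = g (n + 1) := by
      have h0u : (0:ℝ) < x (n + 1) := by linarith
      have h0v : (0:ℝ) < x (n + T + 1) := by linarith
      simp only [hg]
      rw [hd1, show n + 1 + T = n + T + 1 by ring, ← abs_of_pos (mul_pos h0u h0v),
        ← abs_mul, abs_sub_comm (x (n + 1))]
      congr 1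
      field_simp
    have h1 : c * c ≤ x (n + 1) * x (n + T + 1) :=
      mul_le_mul (hcx (n + 1) (by omega)) (hcx (n + T + 1) (by omega)) (by linarith) (by linarith)
    nlinarith [abs_nonneg (x n - x (n + T)), key, h1]
  have hiter : ∀ k, (c * c) ^ k * g 1 ≤ g (1 + k) := by
    intro k
    induction k with
    | zero => simp
    | succ k ih =>
      calc (c * c) ^ (k + 1) * g 1 = (c * c) * ((c * c) ^ k * g 1) := by ring
        _ ≤ (c * c) * g (1 + k) := by
            apply mul_le_mul_of_nonneg_left ih (by nlinarith)
        _ ≤ g (1 + k + 1) := hcontr (1 + k) (by omega)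
  have hg1 : g 1 = 0 := by
    by_contra h
    have hg1pos : 0 < g 1 := (abs_nonneg _).lt_of_ne (Ne.symm h)
    have hcc : 1 < c * c := by nlinarith
    obtain ⟨k, hk⟩ := pow_unbounded_of_one_lt (B / g 1) hcc
    have h2 : B < (c * c) ^ k * g 1 := by
      rw [div_lt_iff₀ hg1pos] at hk
      linarith
    have h3 := hiter k
    have h4 := hgB (1 + k) (by omega)
    linarith
  have hx1 : x (1 + T) = x 1 := by
    have := abs_eq_zero.1 hg1
    have := sub_eq_zero.1 this
    rw [this]
  exact periodize hx1

end Stmt6Aux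
namespace Stmt6Aux

lemma PQ1 {d : ℕ} : PQ d 1 = (pq (Real.sqrt d) 0, (d : ℤ) - (pq (Real.sqrt d) 0) ^ 2) := by
  simp [PQ]

lemma w1_eq {d : ℕ} (hd : ¬ IsSquare d) :
    -(yy d 1)⁻¹ = Real.sqrt d + ((pq (Real.sqrt d) 0 : ℤ) : ℝ) := by
  have hirr : Irrational (Real.sqrt d) := irrational_sqrt_natCast_iff.mpr hd
  have hsd : Real.sqrt d ^ 2 = (d : ℝ) := Real.sq_sqrt (Nat.cast_nonneg d)
  have ha0R : ((pq (Real.sqrt d) 0 : ℤ) : ℝ) = ((⌊Real.sqrt d⌋ : ℤ) : ℝ) := by rw [pq]; rfl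
  set a0 := pq (Real.sqrt d) 0 with ha0
  have h1 : (a0 : ℝ) < Real.sqrt d := by
    rw [ha0R]
    exact lt_of_le_of_ne (Int.floor_le _) (fun h => hirr ⟨⌊Real.sqrt d⌋, h⟩)
  have ha0nn : (0 : ℝ) ≤ (a0 : ℝ) := by
    rw [ha0R]
    exact_mod_cast Int.le_floor.2 (by exact_mod_cast Real.sqrt_nonneg (d : ℝ) : ((0:ℤ):ℝ) ≤ Real.sqrt d)
  have hden : (0 : ℝ) < (d : ℝ) - (a0 : ℝ) ^ 2 := by nlinarith
  have hne1 : ((a0 : ℝ) - Real.sqrt d) ≠ 0 := by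
    intro h; linarith
  have hne2 : ((d : ℝ) - (a0 : ℝ) ^ 2) ≠ 0 := ne_of_gt hden
  have hyy1 : yy d 1 = ((a0 : ℝ) - Real.sqrt d) / ((d : ℝ) - (a0 : ℝ) ^ 2) := by
    rw [yy, PQ1]
    push_cast
    ring
  rw [hyy1]
  field_simp
  linear_combination hsd

lemma w_fract {d : ℕ} (hd : ¬ IsSquare d) {n : ℕ} (hn : 1 ≤ n) :
    Int.fract (-(yy d (n + 1))⁻¹) = - yy d n := by
  rw [Int.fract, pq_from_yy hd hn, yy_succ hd n, inv_inv]
  ring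

end Stmt6Aux

/-- the partial quotients of `√d` (for `d` not a perfect square) are
periodic from rank 1; for the minimal period `T`, `a_T = 2a_0` and
`(a_1, …, a_{T-1})` is a palindrome. -/
theorem stmt6 (d : ℕ) (hd : ¬ IsSquare d) :
    (∃ T, 1 ≤ T ∧ ∀ n, 1 ≤ n →
        pq (Real.sqrt d) (n + T) = pq (Real.sqrt d) n) ∧
    ∀ T, 1 ≤ T →
      (∀ n, 1 ≤ n → pq (Real.sqrt d) (n + T) = pq (Real.sqrt d) n) →
      (∀ T', 1 ≤ T' →
        (∀ n, 1 ≤ n → pq (Real.sqrt d) (n + T') = pq (Real.sqrt d) n) → T ≤ T') →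
      pq (Real.sqrt d) T = 2 * pq (Real.sqrt d) 0 ∧
      ∀ k, 1 ≤ k → k ≤ T - 1 → pq (Real.sqrt d) k = pq (Real.sqrt d) (T - k) := by
  open Stmt6Aux in
  have hirr : Irrational (Real.sqrt d) := irrational_sqrt_natCast_iff.mpr hd
  obtain ⟨S, hS1, hS⟩ := Stmt6Aux.exists_S hd
  constructor
  · exact ⟨S, hS1, fun n hn => by rw [pq, pq, hS n hn]⟩
  · intro T hT1 hT _
    have hpure := Stmt6Aux.pure_period hd hT1 hT
    have hx : cq (Real.sqrt d) (T + 1) = cq (Real.sqrt d) 1 := by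
      have := hpure 1 le_rfl
      rwa [Nat.add_comm 1 T] at this
    obtain ⟨hq1, -, hx1r⟩ := Stmt6Aux.rep hd 1
    obtain ⟨hqT, -, hxTr⟩ := Stmt6Aux.rep hd (T + 1)
    have hPQeq := Stmt6Aux.uniq hd hqT hq1 (by rw [← hxTr, ← hx1r, hx])
    have hyyeq : Stmt6Aux.yy d (T + 1) = Stmt6Aux.yy d 1 := by
      rw [Stmt6Aux.yy, Stmt6Aux.yy, hPQeq.1, hPQeq.2]
    have h1 : pq (Real.sqrt d) T = ⌊-(Stmt6Aux.yy d (T + 1))⁻¹⌋ :=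
      (Stmt6Aux.pq_from_yy hd hT1).symm
    rw [hyyeq, Stmt6Aux.w1_eq hd] at h1
    constructor
    · rw [h1, Int.floor_add_intCast]
      have h2 : ⌊Real.sqrt d⌋ = pq (Real.sqrt d) 0 := rfl
      rw [h2]; ring
    · intro k hk1 hkT
      have claimC : ∀ j, j ≤ T - 1 →
          cq (-(Stmt6Aux.yy d (T + 1))⁻¹) j = -(Stmt6Aux.yy d (T + 1 - j))⁻¹ := by
        intro j
        induction j with
        | zero => intro _; rfl
        | succ j ih =>
          intro hj
          have hj' := ih (by omega)
          rw [cq, hj', show T + 1 - j = (T - j) + 1 by omega,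
            Stmt6Aux.w_fract hd (show 1 ≤ T - j by omega), inv_neg,
            show T + 1 - (j + 1) = T - j by omega]
      have e1 := claimC k hkT
      have e2 : ⌊-(Stmt6Aux.yy d (T + 1 - k))⁻¹⌋ = pq (Real.sqrt d) (T - k) := by
        rw [show T + 1 - k = (T - k) + 1 by omega]
        exact Stmt6Aux.pq_from_yy hd (by omega)
      have e3 : cq (-(Stmt6Aux.yy d (T + 1))⁻¹) k = cq (Real.sqrt d) k := by
        rw [hyyeq, Stmt6Aux.w1_eq hd]
        have hk' : k = 1 + (k - 1) := by omega
        rw [hk', cq_add, cq_add]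
        congr 1
        rw [cq, cq]
        congr 1
        exact Int.fract_add_intCast _ _
      calc pq (Real.sqrt d) k = ⌊cq (Real.sqrt d) k⌋ := rfl
        _ = ⌊cq (-(Stmt6Aux.yy d (T + 1))⁻¹) k⌋ := by rw [e3]
        _ = ⌊-(Stmt6Aux.yy d (T + 1 - k))⁻¹⌋ := by rw [e1]
        _ = pq (Real.sqrt d) (T - k) := e2
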